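/- Given any ε > 0, D a positive integer, β > 0 and p ≥ 2, consider the ℓ_p ball S^D_{p,β} = {x ∈ ℝ^D : ‖x‖_p ≤ β}. Set K = ⌈D / ((1+ε)^p − 1)⌉ and N = C(K + D − 1, D − 1) (a binomial coefficient). Then there exist N nonnegative vectors α^1,…,α^N ∈ ℝ^D such that, setting T_i = {x ∈ ℝ^D : |x_j| ≤ α^i_j for all j ∈ [D]}, one has S^D_{p,β} ⊆ ⋃_{i=1}^N T_i and ‖α^i‖₂ ≤ D^{1/2 − 1/p} β (1 + ε) for every i ∈ [N]. -/

import Mathlib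

noncomputable section


lemma aux_count (D K : ℕ) (hD : 0 < D) :
    (Finset.Nat.antidiagonalTuple D K).card ≤ Nat.choose (K + D - 1) (D - 1) := by
  classical
  have hinj : Set.InjOn (fun f : Fin D → ℕ => (∑ j, (f j) • ({j} : Multiset (Fin D))))
      (Finset.Nat.antidiagonalTuple D K) := by
    intro f hf g hg h
    funext j
    have hcf : ∀ f : Fin D → ℕ, Multiset.count j (∑ i, (f i) • ({i} : Multiset (Fin D))) = f j := by
      intro f
      rw [Multiset.count_sum']
      simp [Multiset.count_nsmul, Multiset.count_singleton]
    have := congrArg (Multiset.count j) h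
    simpa [hcf] using this
  have hcard : ∀ f ∈ Finset.Nat.antidiagonalTuple D K,
      Multiset.card (∑ j, (f j) • ({j} : Multiset (Fin D))) = K := by
    intro f hf
    rw [Finset.Nat.mem_antidiagonalTuple] at hf
    have hcs : ∀ (s : Finset (Fin D)),
        Multiset.card (∑ j ∈ s, (f j) • ({j} : Multiset (Fin D))) = ∑ j ∈ s, f j := by
      intro s
      induction s using Finset.cons_induction with
      | empty => simp
      | cons a s ha ih => simp [Finset.sum_cons, ih, Multiset.card_nsmul]
    rw [hcs, hf]
  -- map into Sym (Fin D) K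
  let φ : (Fin D → ℕ) → Sym (Fin D) K := fun f =>
    if h : Multiset.card (∑ j, (f j) • ({j} : Multiset (Fin D))) = K
    then ⟨_, h⟩ else Sym.replicate K ⟨0, hD⟩
  have hφinj : Set.InjOn φ (Finset.Nat.antidiagonalTuple D K) := by
    intro f hf g hg h
    apply hinj hf hg
    simp only [φ, dif_pos (hcard f hf), dif_pos (hcard g hg)] at h
    simpa [hcard f hf, hcard g hg] using congrArg Subtype.val h
  calc (Finset.Nat.antidiagonalTuple D K).card
      = ((Finset.Nat.antidiagonalTuple D K).image φ).card :=
        (Finset.card_image_of_injOn hφinj).symm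
    _ ≤ Fintype.card (Sym (Fin D) K) := Finset.card_le_card (Finset.subset_univ _) |>.trans
        (le_of_eq (Finset.card_univ))
    _ = Nat.choose (K + D - 1) (D - 1) := by
        rw [Sym.card_sym_eq_choose, Fintype.card_fin]
        have h1 : D + K - 1 = K + D - 1 := by omega
        have h2 : K + D - 1 - (D - 1) = K := by omega
        have := Nat.choose_symm (show D - 1 ≤ K + D - 1 by omega)
        rw [h2] at this
        rw [h1, ← this]

lemma aux_l2_lp (p : ℝ) (hp : 2 ≤ p) (D : ℕ) (hD : 0 < D) (a : Fin D → ℝ)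
    (ha : ∀ j, 0 ≤ a j) :
    Real.sqrt (∑ j, a j ^ 2) ≤ (D : ℝ) ^ ((1:ℝ)/2 - 1/p) * (∑ j, a j ^ p) ^ ((1:ℝ)/p) := by
  have hp0 : (0:ℝ) < p := by linarith
  have hD0 : (0:ℝ) < D := by exact_mod_cast hD
  have hS2 : (0:ℝ) ≤ ∑ j, a j ^ 2 := Finset.sum_nonneg fun j _ => sq_nonneg _
  have hSp : (0:ℝ) ≤ ∑ j, a j ^ p := Finset.sum_nonneg fun j _ => Real.rpow_nonneg (ha j) _
  have hq : (1:ℝ) ≤ p / 2 := by linarith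
  have key := Real.rpow_arith_mean_le_arith_mean_rpow Finset.univ
      (fun _ : Fin D => 1 / (D:ℝ)) (fun j => a j ^ 2)
      (fun i _ => by positivity) (by simp [Finset.sum_const]; field_simp)
      (fun i _ => sq_nonneg _) hq
  have hexp : ∀ j : Fin D, (a j ^ 2 : ℝ) ^ (p/2) = a j ^ p := by
    intro j
    rw [← Real.rpow_natCast (a j) 2, ← Real.rpow_mul (ha j)]
    congr 1; field_simp; norm_num
  simp only [hexp] at key
  rw [← Finset.mul_sum, ← Finset.mul_sum] at key
  -- key : (1/D * ∑ a²)^(p/2) ≤ 1/D * ∑ a^p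
  have h2p : (0:ℝ) ≤ 2 / p := by positivity
  have key2 : (1/(D:ℝ)) * ∑ j, a j ^ 2 ≤ ((1/(D:ℝ)) * ∑ j, a j ^ p) ^ ((2:ℝ)/p) := by
    have h1 : ((1/(D:ℝ)) * ∑ j, a j ^ 2) = (((1/(D:ℝ)) * ∑ j, a j ^ 2) ^ (p/2)) ^ ((2:ℝ)/p) := by
      rw [← Real.rpow_mul (by positivity)]
      rw [show p / 2 * (2 / p) = (1:ℝ) by field_simp, Real.rpow_one]
    rw [h1]
    exact Real.rpow_le_rpow (Real.rpow_nonneg (by positivity) _) key h2p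
  have key3 : ∑ j, a j ^ 2 ≤ (D:ℝ) ^ ((1:ℝ) - 2/p) * (∑ j, a j ^ p) ^ ((2:ℝ)/p) := by
    have := mul_le_mul_of_nonneg_left key2 hD0.le
    rw [← mul_assoc, mul_one_div, div_self hD0.ne', one_mul] at this
    refine this.trans (le_of_eq ?_)
    rw [Real.mul_rpow (by positivity) hSp, ← mul_assoc]
    congr 1
    rw [one_div, Real.inv_rpow hD0.le, Real.rpow_sub hD0, Real.rpow_one, div_eq_mul_inv]
    ring_nf
  calc Real.sqrt (∑ j, a j ^ 2) ≤ Real.sqrt ((D:ℝ) ^ ((1:ℝ) - 2/p) * (∑ j, a j ^ p) ^ ((2:ℝ)/p)) :=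
        Real.sqrt_le_sqrt key3
    _ = (D : ℝ) ^ ((1:ℝ)/2 - 1/p) * (∑ j, a j ^ p) ^ ((1:ℝ)/p) := by
        rw [Real.sqrt_eq_rpow, Real.mul_rpow (by positivity) (Real.rpow_nonneg hSp _),
          ← Real.rpow_mul hD0.le, ← Real.rpow_mul hSp]
        congr 1 <;> [skip; congr 1] <;> field_simp <;> ring

lemma aux_main
    (ε : ℝ) (hε : 0 < ε) (D : ℕ) (hD : 0 < D) (β : ℝ) (hβ : 0 < β)
    (p : ℝ) (hp : 2 ≤ p) :
    ∃ α : Fin (Nat.choose (⌈(D : ℝ) / ((1 + ε) ^ p - 1)⌉₊ + D - 1) (D - 1)) →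
        Fin D → ℝ,
      (∀ i j, 0 ≤ α i j) ∧
      (∀ x : Fin D → ℝ, (∑ j, |x j| ^ p) ^ (1 / p) ≤ β →
        ∃ i, ∀ j, |x j| ≤ α i j) ∧
      (∀ i, Real.sqrt (∑ j, (α i j) ^ 2)
        ≤ (D : ℝ) ^ ((1 : ℝ) / 2 - 1 / p) * β * (1 + ε)) := by
  classical
  have hp0 : (0:ℝ) < p := by linarith
  have hc : (0:ℝ) < (1 + ε) ^ p - 1 := by
    have h1 : (1:ℝ) < (1 + ε) ^ p :=
      (Real.one_lt_rpow_iff_of_pos (by linarith)).2 (Or.inl ⟨by linarith, hp0⟩)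
    linarith
  have hDc : (0:ℝ) < (D:ℝ) := by exact_mod_cast hD
  set K : ℕ := ⌈(D : ℝ) / ((1 + ε) ^ p - 1)⌉₊ with hKdef
  have hKpos : 0 < K := Nat.ceil_pos.2 (div_pos hDc hc)
  have hKr : (0:ℝ) < (K:ℝ) := by exact_mod_cast hKpos
  have hDK : (D:ℝ) / (K:ℝ) ≤ (1 + ε) ^ p - 1 := by
    rw [div_le_iff₀ hKr]
    have h1 := Nat.le_ceil ((D:ℝ) / ((1 + ε) ^ p - 1))
    rw [div_le_iff₀ hc] at h1
    rw [mul_comm]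
    exact_mod_cast h1
  set T := Finset.Nat.antidiagonalTuple D K with hT
  have hTcard : T.card ≤ Nat.choose (K + D - 1) (D - 1) := aux_count D K hD
  -- default element
  set f₀ : Fin D → ℕ := fun j => if j = (⟨0, hD⟩ : Fin D) then K else 0 with hf₀def
  have hf₀ : f₀ ∈ T := by
    rw [hT, Finset.Nat.mem_antidiagonalTuple, hf₀def]
    simp [Finset.sum_ite_eq']
  set gnat : Fin (Nat.choose (K + D - 1) (D - 1)) → (Fin D → ℕ) := fun i =>
    if h : (i : ℕ) < T.card then (T.equivFin.symm ⟨i, h⟩ : _) else f₀ with hgdef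
  have hgmem : ∀ i, gnat i ∈ T := by
    intro i
    rw [hgdef]
    dsimp only
    split
    · exact (T.equivFin.symm _).2
    · exact hf₀
  have hgsum : ∀ i, ∑ j, gnat i j = K := fun i =>
    Finset.Nat.mem_antidiagonalTuple.1 (hgmem i)
  have hgsurj : ∀ f ∈ T, ∃ i, gnat i = f := by
    intro f hf
    set k := T.equivFin ⟨f, hf⟩ with hk
    refine ⟨⟨(k : ℕ), lt_of_lt_of_le k.isLt hTcard⟩, ?_⟩
    rw [hgdef]
    dsimp only
    rw [dif_pos k.isLt]
    have : (⟨(k : ℕ), k.isLt⟩ : Fin T.card) = k := by ext; rfl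
    rw [this, hk, Equiv.symm_apply_apply]
  set α : Fin (Nat.choose (K + D - 1) (D - 1)) → Fin D → ℝ := fun i j =>
    β * (((gnat i j : ℝ) + 1) / (K : ℝ)) ^ ((1:ℝ)/p) with hαdef
  have hαnonneg : ∀ i j, 0 ≤ α i j := by
    intro i j; rw [hαdef]; positivity
  have hβp : (0:ℝ) < β ^ p := Real.rpow_pos_of_pos hβ p
  -- sum of p-th powers of α i
  have hαp : ∀ i, ∑ j, α i j ^ p = β ^ p * (((K:ℝ) + D) / K) := by
    intro i
    have hterm : ∀ j : Fin D, α i j ^ p = β ^ p * (((gnat i j : ℝ) + 1) / (K : ℝ)) := by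
      intro j
      have hcn : (0:ℝ) ≤ ((gnat i j : ℝ) + 1) / (K : ℝ) := by positivity
      rw [hαdef]
      dsimp only
      rw [Real.mul_rpow hβ.le (Real.rpow_nonneg hcn _), ← Real.rpow_mul hcn,
        one_div, inv_mul_cancel₀ hp0.ne', Real.rpow_one]
    rw [Finset.sum_congr rfl fun j _ => hterm j, ← Finset.mul_sum]
    congr 1
    rw [← Finset.sum_div]
    congr 1
    push_cast [← hgsum i]
    rw [Finset.sum_add_distrib]
    simp [Finset.card_univ]
  refine ⟨α, hαnonneg, ?_, ?_⟩
  · -- covering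
    intro x hx
    have h0 : (0:ℝ) ≤ ∑ j, |x j| ^ p :=
      Finset.sum_nonneg fun j _ => Real.rpow_nonneg (abs_nonneg _) _
    have hSx : ∑ j, |x j| ^ p ≤ β ^ p := by
      have h2 := Real.rpow_le_rpow (Real.rpow_nonneg h0 _) hx hp0.le
      rwa [← Real.rpow_mul h0, one_div, inv_mul_cancel₀ hp0.ne', Real.rpow_one] at h2
    set m : Fin D → ℕ := fun j => ⌊(K:ℝ) * |x j| ^ p / β ^ p⌋₊ with hmdef
    have hmle : ∀ j, (m j : ℝ) ≤ (K:ℝ) * |x j| ^ p / β ^ p := by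
      intro j; rw [hmdef]
      exact Nat.floor_le (by positivity)
    have hmsum : (∑ j, (m j : ℝ)) ≤ (K:ℝ) := by
      calc ∑ j, (m j : ℝ) ≤ ∑ j, (K:ℝ) * |x j| ^ p / β ^ p :=
            Finset.sum_le_sum fun j _ => hmle j
        _ = (K:ℝ) / β ^ p * ∑ j, |x j| ^ p := by
            rw [Finset.mul_sum]
            exact Finset.sum_congr rfl fun j _ => by ring
        _ ≤ (K:ℝ) / β ^ p * β ^ p := by
            exact mul_le_mul_of_nonneg_left hSx (by positivity)
        _ = K := by field_simp
    have hmK : ∑ j, m j ≤ K := by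
      have : ((∑ j, m j : ℕ) : ℝ) ≤ (K:ℝ) := by push_cast; exact hmsum
      exact_mod_cast this
    set f : Fin D → ℕ := fun j =>
      m j + (if j = (⟨0, hD⟩ : Fin D) then K - ∑ j, m j else 0) with hfdef
    have hfT : f ∈ T := by
      rw [hT, Finset.Nat.mem_antidiagonalTuple, hfdef]
      dsimp only
      rw [Finset.sum_add_distrib, Finset.sum_ite_eq' Finset.univ]
      simp only [Finset.mem_univ, if_true]
      omega
    obtain ⟨i, hi⟩ := hgsurj f hfT
    refine ⟨i, fun j => ?_⟩
    have hmf : m j ≤ f j := by rw [hfdef]; exact Nat.le_add_right _ _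
    have hxj : |x j| ^ p ≤ ((f j : ℝ) + 1) / K * β ^ p := by
      have h1 : (K:ℝ) * |x j| ^ p / β ^ p < (m j : ℝ) + 1 := by
        rw [hmdef]
        exact Nat.lt_floor_add_one _
      rw [div_lt_iff₀ hβp] at h1
      have h2 : (K:ℝ) * |x j| ^ p ≤ ((f j : ℝ) + 1) * β ^ p := by
        have : (m j : ℝ) + 1 ≤ (f j : ℝ) + 1 := by
          have : (m j : ℝ) ≤ f j := by exact_mod_cast hmf
          linarith
        nlinarith [hβp]
      rw [div_mul_eq_mul_div, le_div_iff₀ hKr]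
      linarith [h2]
    have hrw : |x j| = (|x j| ^ p) ^ ((1:ℝ)/p) := by
      rw [← Real.rpow_mul (abs_nonneg _), mul_one_div, div_self hp0.ne', Real.rpow_one]
    have hαij : α i j = (((f j : ℝ) + 1) / K * β ^ p) ^ ((1:ℝ)/p) := by
      rw [hαdef]
      dsimp only
      rw [hi]
      rw [Real.mul_rpow (by positivity) hβp.le, ← Real.rpow_mul hβ.le, mul_one_div,
        div_self hp0.ne', Real.rpow_one, mul_comm]
    rw [hrw, hαij]
    exact Real.rpow_le_rpow (Real.rpow_nonneg (abs_nonneg _) _) hxj (by positivity)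
  · -- norm bound
    intro i
    refine (aux_l2_lp p hp D hD (α i) (hαnonneg i)).trans ?_
    rw [hαp i]
    have hratio : ((K:ℝ) + D) / K ≤ (1 + ε) ^ p := by
      rw [add_div, div_self hKr.ne']
      linarith [hDK]
    have hq : (β ^ p * (((K:ℝ) + D) / K)) ^ ((1:ℝ)/p)
        = β * ((((K:ℝ) + D) / K)) ^ ((1:ℝ)/p) := by
      rw [Real.mul_rpow hβp.le (by positivity), ← Real.rpow_mul hβ.le, mul_one_div,
        div_self hp0.ne', Real.rpow_one]
    rw [hq]
    have hle : ((((K:ℝ) + D) / K)) ^ ((1:ℝ)/p) ≤ 1 + ε := by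
      have h1 : ((((K:ℝ) + D) / K)) ^ ((1:ℝ)/p) ≤ ((1 + ε) ^ p) ^ ((1:ℝ)/p) :=
        Real.rpow_le_rpow (by positivity) hratio (by positivity)
      rwa [← Real.rpow_mul (by linarith : (0:ℝ) ≤ 1 + ε), mul_one_div,
        div_self hp0.ne', Real.rpow_one] at h1
    calc (D:ℝ) ^ ((1:ℝ)/2 - 1/p) * (β * ((((K:ℝ) + D) / K)) ^ ((1:ℝ)/p))
        ≤ (D:ℝ) ^ ((1:ℝ)/2 - 1/p) * (β * (1 + ε)) := by
          apply mul_le_mul_of_nonneg_left _ (Real.rpow_nonneg hDc.le _)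
          exact mul_le_mul_of_nonneg_left hle hβ.le
      _ = (D:ℝ) ^ ((1:ℝ)/2 - 1/p) * β * (1 + ε) := by ring


open Finset

/-- ℓ_p covering lemma, an entrywise-dominating cover of the ℓ_p ball. -/
theorem lp_covering_lemma
    (ε : ℝ) (hε : 0 < ε) (D : ℕ) (hD : 0 < D) (β : ℝ) (hβ : 0 < β)
    (p : ℝ) (hp : 2 ≤ p) :
    ∃ α : Fin (Nat.choose (⌈(D : ℝ) / ((1 + ε) ^ p - 1)⌉₊ + D - 1) (D - 1)) →
        Fin D → ℝ,
      (∀ i j, 0 ≤ α i j) ∧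
      (∀ x : Fin D → ℝ, (∑ j, |x j| ^ p) ^ (1 / p) ≤ β →
        ∃ i, ∀ j, |x j| ≤ α i j) ∧
      (∀ i, Real.sqrt (∑ j, (α i j) ^ 2)
        ≤ (D : ℝ) ^ ((1 : ℝ) / 2 - 1 / p) * β * (1 + ε)) := by
  exact aux_main ε hε D hD β hβ p hp

end
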